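/- Let a₁,…,a_m be m ≥ 1 distinct qubit labels (ancillas) and let S₁,…,S_m be pairwise disjoint nonempty finite sets of qubit labels, each disjoint from {a₁,…,a_m}. Then for every state |ψ⟩ of the non-ancilla qubits, ( ∏_{j=1}^m C_{{a_j}∪S_j} ) ( ∏_{j=1}^m H_{a_j} ) C_{{a₁,…,a_m}} ( ∏_{j=1}^m H_{a_j} ) ( ∏_{j=1}^m C_{{a_j}∪S_j} ) ( |+⟩_{a₁} ⊗ ⋯ ⊗ |+⟩_{a_m} ⊗ |ψ⟩ ) = |+⟩_{a₁} ⊗ ⋯ ⊗ |+⟩_{a_m} ⊗ C_{S₁∪⋯∪S_m} |ψ⟩. In particular, with each S_j a pair of target qubits, an m-qubit generalized controlled-Z gate on the ancillas together with 2m CCZ gates and 2m Hadamard gates implements a 2m-qubit generalized controlled-Z gate on the targets; iterating this recursion yields the C^NZ gate of Theorem 2 with a logarithmic number of Hadamard layers. -/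

import Mathlib

noncomputable section

/-- The state space of qubits labeled by `ι`: a vector is the family of its
amplitudes in the computational basis `{|x⟩ : x : ι → Bool}`. -/
abbrev QState (ι : Type) := (ι → Bool) → ℂ

/-- The sign `(−1)^{∏_{i∈e} x_i}` of the generalized controlled-Z gate `C_e`
on the basis vector `|x⟩`. -/
def csign {ι : Type} (e : Finset ι) (x : ι → Bool) : ℂ :=
  if ∀ i ∈ e, x i = true then -1 else 1

/-- The generalized controlled-Z gate `C_e`, the diagonal unitary with
`C_e |x⟩ = (−1)^{∏_{i∈e} x_i} |x⟩`. -/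
def Cgate {ι : Type} (e : Finset ι) (ψ : QState ι) : QState ι :=
  fun x => csign e x * ψ x

/-- The Hadamard gate `H_i` on qubit `i`, acting as the identity on all other
qubits. -/
def Hgate {ι : Type} [DecidableEq ι] (i : ι) (ψ : QState ι) : QState ι :=
  fun x => (((Real.sqrt 2)⁻¹ : ℝ) : ℂ) *
    (ψ (Function.update x i false) +
      (if x i = true then -1 else 1) * ψ (Function.update x i true))

/-- The Pauli-X (bit flip) gate `X_i` on qubit `i`. -/
def Xgate {ι : Type} [DecidableEq ι] (i : ι) (ψ : QState ι) : QState ι :=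
  fun x => ψ (Function.update x i (!(x i)))

/-- The generalized CNOT gate with control set `f` and target `t ∉ f`:
it flips bit `t` of `x` exactly when `∏_{j∈f} x_j = 1`. -/
def CNOTgate {ι : Type} [DecidableEq ι] (f : Finset ι) (t : ι) (ψ : QState ι) : QState ι :=
  fun x => ψ (if ∀ j ∈ f, x j = true then Function.update x t (!(x t)) else x)

/-- `|+⟩^{⊗n}`, the uniform superposition `2^{−n/2} ∑_x |x⟩`. -/
def plusAll (ι : Type) [Fintype ι] : QState ι :=
  fun _ => (((Real.sqrt 2)⁻¹ : ℝ) : ℂ) ^ (Fintype.card ι)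

/-- The computational-basis ket `|s⟩`. -/
def zketS {ι : Type} [Fintype ι] [DecidableEq ι] (s : ι → Bool) : QState ι :=
  fun x => if x = s then 1 else 0

/-- The Pauli-X-basis product ket: qubit `i` is `|+⟩` if `s i = false` and
`|−⟩` if `s i = true`, where `|±⟩ = (|0⟩ ± |1⟩)/√2`. -/
def xketS {ι : Type} [Fintype ι] (s : ι → Bool) : QState ι :=
  fun x => ∏ i, ((((Real.sqrt 2)⁻¹ : ℝ) : ℂ) * (if s i && x i then -1 else 1))

/-- Tensor product of a state of the qubits `κ` with a state of the qubits `ι`. -/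
def tensP {κ ι : Type} (φ : QState κ) (u : QState ι) : QState (κ ⊕ ι) :=
  fun x => φ (fun i => x (Sum.inl i)) * u (fun j => x (Sum.inr j))

/-- The partial inner product `(⟨φ|_κ ⊗ I)`, sending a state of the qubits
`κ ⊕ ι` to a state of the remaining qubits `ι`. -/
def pinner {κ ι : Type} [Fintype κ] [DecidableEq κ] (φ : QState κ) (w : QState (κ ⊕ ι)) :
    QState ι :=
  fun y => ∑ b : κ → Bool, (starRingEnd ℂ) (φ b) * w (Sum.elim b y)

/-- Tensor product of a single-qubit state on qubit `i` with a state of the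
remaining qubits. -/
def tensQ {ι : Type} [DecidableEq ι] (i : ι) (φ : Bool → ℂ) (ψ : QState {j : ι // j ≠ i}) :
    QState ι :=
  fun x => φ (x i) * ψ (fun j => x j.1)

/-- The partial inner product over the single qubit `i`. -/
def pinner1 {ι : Type} [DecidableEq ι] (i : ι) (φ : Bool → ℂ) (w : QState ι) :
    QState {j : ι // j ≠ i} :=
  fun y => ∑ b : Bool, (starRingEnd ℂ) (φ b) * w (fun j => if h : j = i then b else y ⟨j, h⟩)

/-- The hypergraph state `∏_{e∈E} C_e |+⟩^{⊗|V|}` of the hypergraph `(V, E)`. -/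
def hgState {ι : Type} [Fintype ι] (E : Finset (Finset ι)) : QState ι :=
  fun x => (∏ e ∈ E, csign e x) * plusAll ι x

/-- Sequential composition (operator product) of a list of operators. -/
def seqComp {α : Type} (fs : List (α → α)) : α → α := fs.foldr (· ∘ ·) id
namespace CNZAux

open Finset

/-- The single-qubit controlled sign `(-1)^{a·b}`. -/
def hs (a b : Bool) : ℂ := if a && b then -1 else 1

lemma hs_false (a : Bool) : hs a false = 1 := by simp [hs]

lemma hs_true (a : Bool) : hs a true = if a = true then -1 else 1 := by
  cases a <;> simp [hs]

lemma hs_mul_self (a b : Bool) : hs a b * hs a b = 1 := by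
  cases a <;> cases b <;> norm_num [hs]

lemma seqComp_cons {α : Type} (f : α → α) (fs : List (α → α)) (a : α) :
    seqComp (f :: fs) a = f (seqComp fs a) := rfl

lemma seqComp_Cgate {κ ι : Type} (l : List κ) (e : κ → Finset ι) (ψ : QState ι)
    (x : ι → Bool) :
    seqComp (l.map fun j => Cgate (e j)) ψ x
      = (l.map fun j => csign (e j) x).prod * ψ x := by
  induction l with
  | nil => simp [seqComp]
  | cons j l ih =>
      rw [List.map_cons, seqComp_cons]
      show csign (e j) x * _ = _
      rw [ih, List.map_cons, List.prod_cons, mul_assoc]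

lemma hlayer {ι : Type} [DecidableEq ι] {m : ℕ} (l : List (Fin m))
    (ψ : QState (Fin m ⊕ ι)) :
    ∀ x : Fin m ⊕ ι → Bool, l.Nodup →
    seqComp (l.map fun j => Hgate (Sum.inl j : Fin m ⊕ ι)) ψ x =
      (((Real.sqrt 2)⁻¹ : ℝ) : ℂ) ^ l.length *
        ∑ b : Fin m → Bool,
          (if ∀ k, k ∉ l → b k = x (Sum.inl k) then
              ∏ j ∈ l.toFinset, hs (x (Sum.inl j)) (b j) else 0) *
            ψ (Sum.elim b fun i => x (Sum.inr i)) := by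
  induction l with
  | nil =>
      intro x _
      have h1 : ∀ b : Fin m → Bool,
          (if ∀ k, k ∉ ([] : List (Fin m)) → b k = x (Sum.inl k) then
              ∏ j ∈ ([] : List (Fin m)).toFinset, hs (x (Sum.inl j)) (b j) else 0) *
            ψ (Sum.elim b fun i => x (Sum.inr i))
          = if b = (fun k => x (Sum.inl k)) then
              ψ (Sum.elim b fun i => x (Sum.inr i)) else 0 := by
        intro b
        by_cases h : b = fun k => x (Sum.inl k)
        · rw [if_pos, if_pos h]
          · simp
          · intro k _; exact congrFun h k
        · rw [if_neg, if_neg h, zero_mul]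
          intro hc
          exact h (funext fun k => hc k List.not_mem_nil)
      simp only [List.map_nil, List.length_nil, pow_zero, one_mul]
      rw [Finset.sum_congr rfl (fun b _ => h1 b),
        Finset.sum_ite_eq' Finset.univ (fun k => x (Sum.inl k))]
      rw [if_pos (Finset.mem_univ _)]
      show ψ x = _
      congr 1
      funext z
      cases z <;> rfl
  | cons j l ih =>
      intro x hl
      obtain ⟨hj, hl'⟩ := List.nodup_cons.mp hl
      rw [List.map_cons, seqComp_cons]
      show (((Real.sqrt 2)⁻¹ : ℝ) : ℂ) *
        (seqComp (l.map fun j => Hgate (Sum.inl j : Fin m ⊕ ι)) ψ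
            (Function.update x (Sum.inl j) false) +
          (if x (Sum.inl j) = true then -1 else 1) *
            seqComp (l.map fun j => Hgate (Sum.inl j : Fin m ⊕ ι)) ψ
              (Function.update x (Sum.inl j) true)) = _
      rw [ih _ hl', ih _ hl']
      have hup : ∀ (c : Bool) (k : Fin m),
          Function.update x (Sum.inl j) c (Sum.inl k)
            = if k = j then c else x (Sum.inl k) := by
        intro c k
        rw [Function.update_apply]
        simp [Sum.inl.injEq]
      have hupr : ∀ (c : Bool) (i : ι),
          Function.update x (Sum.inl j) c (Sum.inr i) = x (Sum.inr i) := by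
        intro c i
        exact Function.update_of_ne (by simp) _ _
      have hprod : ∀ (c : Bool) (b : Fin m → Bool),
          (∏ j' ∈ l.toFinset, hs (Function.update x (Sum.inl j) c (Sum.inl j')) (b j'))
            = ∏ j' ∈ l.toFinset, hs (x (Sum.inl j')) (b j') := by
        intro c b
        refine Finset.prod_congr rfl fun k hk => ?_
        rw [hup, if_neg]
        intro h; exact hj (h ▸ List.mem_toFinset.mp hk)
      have key : ∀ b : Fin m → Bool,
          (if ∀ k, k ∉ l → b k = Function.update x (Sum.inl j) false (Sum.inl k) then
              ∏ j' ∈ l.toFinset, hs (Function.update x (Sum.inl j) false (Sum.inl j')) (b j')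
            else 0) *
            ψ (Sum.elim b fun i => Function.update x (Sum.inl j) false (Sum.inr i)) +
          (if x (Sum.inl j) = true then -1 else 1) *
          ((if ∀ k, k ∉ l → b k = Function.update x (Sum.inl j) true (Sum.inl k) then
              ∏ j' ∈ l.toFinset, hs (Function.update x (Sum.inl j) true (Sum.inl j')) (b j')
            else 0) *
            ψ (Sum.elim b fun i => Function.update x (Sum.inl j) true (Sum.inr i)))
          = (if ∀ k, k ∉ (j :: l) → b k = x (Sum.inl k) then
              ∏ j' ∈ (j :: l).toFinset, hs (x (Sum.inl j')) (b j') else 0) *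
            ψ (Sum.elim b fun i => x (Sum.inr i)) := by
        intro b
        have harg : ∀ c : Bool,
            (fun i => Function.update x (Sum.inl j) c (Sum.inr i))
              = fun i => x (Sum.inr i) := fun c => funext fun i => hupr c i
        rw [harg, harg, hprod, hprod]
        have hcond : ∀ c : Bool,
            (∀ k, k ∉ l → b k = Function.update x (Sum.inl j) c (Sum.inl k))
              ↔ (b j = c ∧ ∀ k, k ∉ (j :: l) → b k = x (Sum.inl k)) := by
          intro c
          constructor
          · intro h
            refine ⟨by simpa [hup] using h j hj, fun k hk => ?_⟩
            have hkj : k ≠ j := fun h' => hk (h' ▸ (List.mem_cons_self : j ∈ j :: l))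
            have hkl : k ∉ l := fun h' => hk (List.mem_cons_of_mem j h')
            simpa [hup, hkj] using h k hkl
          · rintro ⟨h1, h2⟩ k hk
            rw [hup]
            by_cases hkj : k = j
            · subst hkj; simpa using h1
            · rw [if_neg hkj]
              exact h2 k (by simp [hkj, hk])
        rw [if_congr (hcond false) rfl rfl, if_congr (hcond true) rfl rfl]
        have hins : (j :: l).toFinset = insert j l.toFinset := List.toFinset_cons
        have hjt : j ∉ l.toFinset := fun h => hj (List.mem_toFinset.mp h)
        rw [hins, Finset.prod_insert hjt]
        by_cases hP : ∀ k : Fin m, ¬k = j → k ∉ l → b k = x (Sum.inl k)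
        · cases hbj : b j
          · simp [hbj, hP, hs_false]
          · simp [hbj, hP, hs_true]
        · simp [hP]
      have merge := Finset.sum_congr (rfl : (Finset.univ : Finset (Fin m → Bool)) = Finset.univ) (fun b _ => key b)
      rw [Finset.sum_add_distrib, ← Finset.mul_sum] at merge
      rw [List.length_cons, pow_succ]
      linear_combination ((((Real.sqrt 2)⁻¹ : ℝ) : ℂ) ^ l.length * (((Real.sqrt 2)⁻¹ : ℝ) : ℂ)) * merge

lemma hlayer_univ {ι : Type} [DecidableEq ι] {m : ℕ} (ψ : QState (Fin m ⊕ ι))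
    (x : Fin m ⊕ ι → Bool) :
    seqComp ((List.finRange m).map fun j => Hgate (Sum.inl j : Fin m ⊕ ι)) ψ x =
      (((Real.sqrt 2)⁻¹ : ℝ) : ℂ) ^ m *
        ∑ b : Fin m → Bool,
          (∏ j, hs (x (Sum.inl j)) (b j)) * ψ (Sum.elim b fun i => x (Sum.inr i)) := by
  rw [hlayer _ ψ x (List.nodup_finRange m)]
  simp [List.mem_finRange, List.toFinset_finRange]

lemma csign_insert {ι : Type} [DecidableEq ι] {m : ℕ} (j : Fin m) (S : Finset ι)
    (z : Fin m ⊕ ι → Bool) :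
    csign (insert (Sum.inl j) (S.map ⟨Sum.inr, Sum.inr_injective⟩) : Finset (Fin m ⊕ ι)) z
      = hs (z (Sum.inl j)) (decide (∀ i ∈ S, z (Sum.inr i) = true)) := by
  unfold csign hs
  refine if_congr ?_ rfl rfl
  rw [Finset.forall_mem_insert]
  simp [Finset.mem_map]

lemma csign_anc {ι : Type} {m : ℕ} (z : Fin m ⊕ ι → Bool) :
    csign ((Finset.univ : Finset (Fin m)).map ⟨Sum.inl, Sum.inl_injective⟩) z
      = if ∀ j, z (Sum.inl j) = true then -1 else 1 := by
  unfold csign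
  refine if_congr ?_ rfl rfl
  simp [Finset.mem_map]

lemma csign_biUnion {ι : Type} [DecidableEq ι] {m : ℕ} (S : Fin m → Finset ι)
    (y : ι → Bool) :
    csign (Finset.univ.biUnion S) y
      = if ∀ j, (decide (∀ i ∈ S j, y i = true)) = true then -1 else 1 := by
  unfold csign
  refine if_congr ?_ rfl rfl
  simp only [Finset.mem_biUnion, Finset.mem_univ, true_and, decide_eq_true_eq]
  constructor
  · intro h j i hi; exact h i ⟨j, hi⟩
  · rintro h i ⟨j, hj⟩; exact h j i hj

lemma hs_sum (b t : Bool) :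
    ∑ c : Bool, hs b c * hs c t = if b = t then (2 : ℂ) else 0 := by
  cases b <;> cases t <;> norm_num [hs, Fintype.sum_bool]

lemma prod_ite_two {m : ℕ} (b t : Fin m → Bool) :
    (∏ j, if b j = t j then (2 : ℂ) else 0) = if b = t then (2 : ℂ) ^ m else 0 := by
  by_cases h : b = t
  · subst h; simp
  · rw [if_neg h]
    obtain ⟨j, hj⟩ : ∃ j, b j ≠ t j := by
      by_contra hc
      push_neg at hc
      exact h (funext hc)
    exact Finset.prod_eq_zero (Finset.mem_univ j) (if_neg hj)

lemma c2_mul_self : (((Real.sqrt 2)⁻¹ : ℝ) : ℂ) * (((Real.sqrt 2)⁻¹ : ℝ) : ℂ) = 2⁻¹ := by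
  rw [← Complex.ofReal_mul, ← mul_inv, Real.mul_self_sqrt (by norm_num : (0:ℝ) ≤ 2)]
  norm_num


lemma big_calc {m : ℕ} (a t : Fin m → Bool) (v : ℂ) :
    (∏ j, hs (a j) (t j)) * ((((Real.sqrt 2)⁻¹ : ℝ) : ℂ) ^ m *
      ∑ b : Fin m → Bool, (∏ j, hs (a j) (b j)) *
        ((if ∀ j, b j = true then -1 else 1) * ((((Real.sqrt 2)⁻¹ : ℝ) : ℂ) ^ m *
          ∑ b2 : Fin m → Bool, (∏ j, hs (b j) (b2 j)) *
            ((∏ j, hs (b2 j) (t j)) * ((((Real.sqrt 2)⁻¹ : ℝ) : ℂ) ^ m * v)))))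
    = (((Real.sqrt 2)⁻¹ : ℝ) : ℂ) ^ m * ((if ∀ j, t j = true then -1 else 1) * v) := by
  set c : ℂ := (((Real.sqrt 2)⁻¹ : ℝ) : ℂ) with hc
  have hinner : ∀ b : Fin m → Bool,
      (∑ b2 : Fin m → Bool, (∏ j, hs (b j) (b2 j)) *
        ((∏ j, hs (b2 j) (t j)) * (c ^ m * v)))
      = (if b = t then (2 : ℂ) ^ m else 0) * (c ^ m * v) := by
    intro b
    have e1 : ∀ b2 : Fin m → Bool,
        (∏ j, hs (b j) (b2 j)) * ((∏ j, hs (b2 j) (t j)) * (c ^ m * v))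
          = (∏ j, hs (b j) (b2 j) * hs (b2 j) (t j)) * (c ^ m * v) := by
      intro b2; rw [Finset.prod_mul_distrib, mul_assoc]
    rw [Finset.sum_congr (rfl : (Finset.univ : Finset (Fin m → Bool)) = Finset.univ)
      (fun b2 _ => e1 b2), ← Finset.sum_mul]
    congr 1
    rw [← Fintype.prod_sum (fun j c' => hs (b j) c' * hs c' (t j)),
      Finset.prod_congr rfl (fun j _ => hs_sum (b j) (t j)), prod_ite_two]
  have h2 : ∀ b : Fin m → Bool,
      (∏ j, hs (a j) (b j)) *
        ((if ∀ j, b j = true then -1 else 1) * (c ^ m *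
          ((if b = t then (2 : ℂ) ^ m else 0) * (c ^ m * v))))
      = if b = t then (∏ j, hs (a j) (t j)) *
          ((if ∀ j, t j = true then -1 else 1) * (c ^ m * ((2 : ℂ) ^ m * (c ^ m * v))))
        else 0 := by
    intro b
    by_cases hbt : b = t
    · subst hbt; simp
    · simp [hbt]
  rw [Finset.sum_congr (rfl : (Finset.univ : Finset (Fin m → Bool)) = Finset.univ)
    (fun b _ => by rw [hinner b])]
  rw [Finset.sum_congr (rfl : (Finset.univ : Finset (Fin m → Bool)) = Finset.univ)
    (fun b _ => h2 b)]
  rw [Finset.sum_ite_eq' Finset.univ t, if_pos (Finset.mem_univ t)]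
  have hprod1 : (∏ j, hs (a j) (t j)) * (∏ j, hs (a j) (t j)) = 1 := by
    rw [← Finset.prod_mul_distrib]
    exact Finset.prod_eq_one fun j _ => hs_mul_self _ _
  have hcm : c ^ m * c ^ m * (2 : ℂ) ^ m = 1 := by
    rw [← mul_pow, ← mul_pow, c2_mul_self]
    norm_num
  set κ : ℂ := if ∀ j, t j = true then -1 else 1 with hκ
  have : (∏ j, hs (a j) (t j)) * (c ^ m * ((∏ j, hs (a j) (t j)) *
        (κ * (c ^ m * ((2 : ℂ) ^ m * (c ^ m * v))))))
      = ((∏ j, hs (a j) (t j)) * (∏ j, hs (a j) (t j))) *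
        ((c ^ m * c ^ m * (2 : ℂ) ^ m) * (c ^ m * (κ * v))) := by ring
  rw [this, hprod1, hcm, one_mul, one_mul]

end CNZAux

open CNZAux in
/-- Let `a₁,…,a_m` (`m ≥ 1`) be distinct ancilla qubits
(here `Sum.inl j`, `j : Fin m`) and `S₁,…,S_m` pairwise disjoint nonempty
finite sets of target qubit labels (here embedded via `Sum.inr`, hence
automatically disjoint from the ancillas).  Then for every state `ψ` of the
targets,
`(∏_j C_{{a_j}∪S_j}) (∏_j H_{a_j}) C_{{a₁,…,a_m}} (∏_j H_{a_j})
  (∏_j C_{{a_j}∪S_j}) (|+⟩_{a₁} ⊗ ⋯ ⊗ |+⟩_{a_m} ⊗ |ψ⟩)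
  = |+⟩_{a₁} ⊗ ⋯ ⊗ |+⟩_{a_m} ⊗ C_{S₁∪⋯∪S_m} |ψ⟩`. -/
theorem CNZ_recursion_step {ι : Type} [DecidableEq ι] (m : ℕ) (hm : 1 ≤ m)
    (S : Fin m → Finset ι) (hne : ∀ j, (S j).Nonempty)
    (hdisj : ∀ j k, j ≠ k → Disjoint (S j) (S k)) (ψ : QState ι) :
    seqComp ((List.finRange m).map fun j =>
        Cgate (insert (Sum.inl j)
          ((S j).map ⟨Sum.inr, Sum.inr_injective⟩ : Finset (Fin m ⊕ ι))))
      (seqComp ((List.finRange m).map fun j => Hgate (Sum.inl j : Fin m ⊕ ι))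
        (Cgate ((Finset.univ : Finset (Fin m)).map ⟨Sum.inl, Sum.inl_injective⟩)
          (seqComp ((List.finRange m).map fun j => Hgate (Sum.inl j : Fin m ⊕ ι))
            (seqComp ((List.finRange m).map fun j =>
                Cgate (insert (Sum.inl j)
                  ((S j).map ⟨Sum.inr, Sum.inr_injective⟩ : Finset (Fin m ⊕ ι))))
              (tensP (plusAll (Fin m)) ψ))))) =
      tensP (plusAll (Fin m)) (Cgate (Finset.univ.biUnion S) ψ) := by
  classical
  funext x
  rw [seqComp_Cgate, hlayer_univ]
  simp only [Cgate, hlayer_univ, seqComp_Cgate, tensP, plusAll, csign_anc, csign_insert,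
    csign_biUnion, Sum.elim_inl, Sum.elim_inr, ← Fin.prod_univ_def]
  simp only [Fintype.card_fin]
  exact big_calc (fun j => x (Sum.inl j)) (fun j => decide (∀ i ∈ S j, x (Sum.inr i) = true))
    (ψ fun i => x (Sum.inr i))
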